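/- A ring R is simple (has no nonzero proper two-sided ideals) if and only if every nonzero left R-module M is prime, i.e., for every two-sided ideal I of R and every submodule K ≤ M, IK = 0 implies IM = 0. -/

import Mathlib

universe u

/-- A ring `R` is simple iff every nonzero left `R`-module `M` is prime:
for every two-sided ideal `I` and nonzero submodule `K ≤ M`, `IK = 0` implies `IM = 0`. -/
theorem stmt11 (R : Type u) [Ring R] :
    (∀ I : TwoSidedIdeal R, I = ⊥ ∨ I = ⊤) ↔
      ∀ (M : Type u) [AddCommGroup M] [Module R M], Nontrivial M →
        ∀ (I : TwoSidedIdeal R) (K : Submodule R M), K ≠ ⊥ →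
          TwoSidedIdeal.asIdeal I • K = ⊥ →
            TwoSidedIdeal.asIdeal I • (⊤ : Submodule R M) = ⊥ := by
  constructor
  · intro h M _ _ _ I K hK hIK
    rcases h I with rfl | rfl
    · have : TwoSidedIdeal.asIdeal (⊥ : TwoSidedIdeal R) = ⊥ := by
        ext x
        simp [TwoSidedIdeal.mem_asIdeal]
      rw [this, Submodule.bot_smul]
    · have : TwoSidedIdeal.asIdeal (⊤ : TwoSidedIdeal R) = ⊤ := by
        ext x
        simp [TwoSidedIdeal.mem_asIdeal]
      rw [this, Submodule.top_smul] at hIK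
      exact absurd hIK hK
  · intro h I
    by_contra hI
    push_neg at hI
    obtain ⟨hbot, htop⟩ := hI
    set J := TwoSidedIdeal.asIdeal I with hJ
    have hJtop : J ≠ ⊤ := by
      intro hJt
      apply htop
      apply TwoSidedIdeal.eq_top
      have : (1 : R) ∈ J := hJt ▸ trivial
      simpa [hJ, TwoSidedIdeal.mem_asIdeal] using this
    haveI : Nontrivial (R ⧸ J) := Submodule.Quotient.nontrivial_iff.2 hJtop
    set M := R × (R ⧸ J)
    haveI : Nontrivial M := inferInstance
    set K : Submodule R M := (⊥ : Submodule R R).prod (⊤ : Submodule R (R ⧸ J)) with hK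
    have hKne : K ≠ ⊥ := by
      obtain ⟨q, hq⟩ := exists_ne (0 : R ⧸ J)
      intro hKb
      have : ((0 : R), q) ∈ K := Submodule.mem_prod.mpr ⟨Submodule.zero_mem _, trivial⟩
      rw [hKb] at this
      rw [Submodule.mem_bot, Prod.ext_iff] at this
      exact hq this.2
    have hIK : J • K = ⊥ := by
      rw [eq_bot_iff]
      apply Submodule.smul_le.mpr
      rintro r hr ⟨a, q⟩ hn
      simp only [hK, Submodule.mem_prod, Submodule.mem_bot] at hn
      obtain ⟨rfl, -⟩ := hn
      obtain ⟨x, rfl⟩ := Submodule.Quotient.mk_surjective J q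
      rw [Submodule.mem_bot]
      have h2 : r • (((0 : R), Submodule.Quotient.mk x) : R × R ⧸ J)
          = (r • (0 : R), r • (Submodule.Quotient.mk x : R ⧸ J)) := rfl
      rw [h2, smul_zero, Prod.ext_iff]
      refine ⟨rfl, ?_⟩
      show r • (Submodule.Quotient.mk x : R ⧸ J) = 0
      rw [← Submodule.Quotient.mk_smul J r x, Submodule.Quotient.mk_eq_zero]
      have hrI : r ∈ I := by simpa [hJ, TwoSidedIdeal.mem_asIdeal] using hr
      have : r * x ∈ I := I.mul_mem_right r x hrI
      simpa [hJ, TwoSidedIdeal.mem_asIdeal, smul_eq_mul] using this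
    have hIM := h M inferInstance I K hKne hIK
    apply hbot
    apply le_antisymm ?_ bot_le
    intro i hi
    have : i • ((1 : R), (0 : R ⧸ J)) ∈ J • (⊤ : Submodule R M) :=
      Submodule.smul_mem_smul (by simpa [hJ, TwoSidedIdeal.mem_asIdeal] using hi) trivial
    rw [hIM] at this
    rw [Submodule.mem_bot, Prod.ext_iff] at this
    simp only [Prod.smul_fst, Prod.fst_zero, smul_eq_mul, mul_one] at this
    have : i = 0 := this.1
    simp [this]
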